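/- For all integers s ≥ 1 and t ≥ 1, setting r = s + 4, the tree T_{s,t}^r satisfies γ(T_{s,t}^r) = ν₂(T_{s,t}^r) − 1. -/

import Mathlib

/-- A dominating set: every vertex is in `D` or adjacent to a vertex of `D`. -/
def IsDominatingSet {V : Type*} (G : SimpleGraph V) (D : Finset V) : Prop :=
  ∀ v : V, v ∈ D ∨ ∃ u ∈ D, G.Adj u v

/-- The domination number `γ(G)`: minimum cardinality of a dominating set. -/
noncomputable def dominationNumber {V : Type*} [Fintype V] (G : SimpleGraph V) : ℕ :=
  sInf {n | ∃ D : Finset V, IsDominatingSet G D ∧ D.card = n}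

/-- A 2-packing: a set of edges of `G` such that no three (pairwise distinct)
edges share a common vertex. -/
def IsTwoPacking {V : Type*} (G : SimpleGraph V) (R : Finset (Sym2 V)) : Prop :=
  (↑R : Set (Sym2 V)) ⊆ G.edgeSet ∧
  ∀ e₁ ∈ R, ∀ e₂ ∈ R, ∀ e₃ ∈ R, ∀ v : V,
    v ∈ e₁ → v ∈ e₂ → v ∈ e₃ → (e₁ = e₂ ∨ e₁ = e₃ ∨ e₂ = e₃)

/-- The 2-packing number `ν₂(G)`: maximum cardinality of a 2-packing. -/
noncomputable def twoPackingNumber {V : Type*} [Fintype V] (G : SimpleGraph V) : ℕ :=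
  sSup {n | ∃ R : Finset (Sym2 V), IsTwoPacking G R ∧ R.card = n}

/-- The tree `T_{s,t}^r` (with `r = s + 4`): a path `v₀v₁v₂v₃v₄` (the `Sum.inl`
vertices), pendant paths `v₂ pᵢ qᵢ` for `i = 1,…,s` and pendant vertices
`w₁,…,w_t` attached to `v₂`. -/
def Tst (s t : ℕ) : SimpleGraph (Fin 5 ⊕ Fin s ⊕ Fin s ⊕ Fin t) :=
  SimpleGraph.fromRel (fun a b =>
    match a, b with
    | Sum.inl i, Sum.inl j => (i : ℕ) + 1 = (j : ℕ)                 -- path edges vᵢ v_{i+1}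
    | Sum.inr (Sum.inl i), Sum.inr (Sum.inr (Sum.inl j)) => (i : ℕ) = (j : ℕ)  -- pᵢ qᵢ
    | Sum.inl i, Sum.inr (Sum.inl _) => (i : ℕ) = 2                 -- v₂ pᵢ
    | Sum.inl i, Sum.inr (Sum.inr (Sum.inr _)) => (i : ℕ) = 2       -- v₂ wⱼ
    | _, _ => False)

namespace TstAux


variable {s t : ℕ}

lemma nbr_q {u : Fin 5 ⊕ Fin s ⊕ Fin s ⊕ Fin t} {i : Fin s}
    (h : (Tst s t).Adj u (Sum.inr (Sum.inr (Sum.inl i)))) : u = Sum.inr (Sum.inl i) := by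
  rcases u with a | a | a | a <;>
    simp [Tst, SimpleGraph.fromRel_adj, Fin.ext_iff] at h ⊢ <;> omega

lemma nbr_v0 {u : Fin 5 ⊕ Fin s ⊕ Fin s ⊕ Fin t}
    (h : (Tst s t).Adj u (Sum.inl 0)) : u = Sum.inl 1 := by
  rcases u with a | a | a | a <;>
    simp [Tst, SimpleGraph.fromRel_adj] at h ⊢ <;> omega

lemma nbr_v4 {u : Fin 5 ⊕ Fin s ⊕ Fin s ⊕ Fin t}
    (h : (Tst s t).Adj u (Sum.inl 4)) : u = Sum.inl 3 := by
  rcases u with a | a | a | a <;>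
    simp [Tst, SimpleGraph.fromRel_adj, Fin.ext_iff] at h ⊢ <;>
    first | omega | exact absurd h (by decide)

lemma nbr_w {u : Fin 5 ⊕ Fin s ⊕ Fin s ⊕ Fin t} {j : Fin t}
    (h : (Tst s t).Adj u (Sum.inr (Sum.inr (Sum.inr j)))) : u = Sum.inl 2 := by
  rcases u with a | a | a | a <;>
    simp [Tst, SimpleGraph.fromRel_adj, Fin.ext_iff] at h ⊢ <;> omega

/-- The dominating set `{v₁, v₂, v₃} ∪ {p_i}`. -/
noncomputable def D0 (s t : ℕ) : Finset (Fin 5 ⊕ Fin s ⊕ Fin s ⊕ Fin t) :=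
  {Sum.inl 1, Sum.inl 2, Sum.inl 3} ∪
    Finset.univ.image (fun i : Fin s => Sum.inr (Sum.inl i))

lemma D0_card : (D0 s t).card = s + 3 := by
  classical
  rw [D0, Finset.card_union_of_disjoint, Finset.card_image_of_injective _
    (fun i j h => by simpa using h)]
  · simp only [Finset.card_univ, Fintype.card_fin]
    rw [Finset.card_insert_of_notMem (by simp),
      Finset.card_insert_of_notMem (by simp), Finset.card_singleton]
    omega
  · simp [Finset.disjoint_left]

lemma D0_dom : IsDominatingSet (Tst s t) (D0 s t) := by
  classical
  intro v
  rcases v with a | a | a | a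
  · fin_cases a
    · exact Or.inr ⟨Sum.inl 1, by simp [D0], by
        simp [Tst, SimpleGraph.fromRel_adj]⟩
    · exact Or.inl (by simp [D0])
    · exact Or.inl (by simp [D0])
    · exact Or.inl (by simp [D0])
    · exact Or.inr ⟨Sum.inl 3, by simp [D0], by
        simp [Tst, SimpleGraph.fromRel_adj] <;> decide⟩
  · exact Or.inl (by simp [D0])
  · exact Or.inr ⟨Sum.inr (Sum.inl a), by simp [D0], by
      simp [Tst, SimpleGraph.fromRel_adj]⟩
  · exact Or.inr ⟨Sum.inl 2, by simp [D0], by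
      simp [Tst, SimpleGraph.fromRel_adj]⟩

/-- classification function for the lower bound. -/
def cfun : (Fin 5 ⊕ Fin s ⊕ Fin s ⊕ Fin t) → (Fin s ⊕ Fin 3) := fun v =>
  match v with
  | Sum.inl i => if (i : ℕ) ≤ 1 then Sum.inr 0 else
      if (i : ℕ) = 2 then Sum.inr 2 else Sum.inr 1
  | Sum.inr (Sum.inl i) => Sum.inl i
  | Sum.inr (Sum.inr (Sum.inl i)) => Sum.inl i
  | Sum.inr (Sum.inr (Sum.inr _)) => Sum.inr 2

lemma dom_lb (ht : 1 ≤ t) (D : Finset (Fin 5 ⊕ Fin s ⊕ Fin s ⊕ Fin t))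
    (hD : IsDominatingSet (Tst s t) D) : s + 3 ≤ D.card := by
  classical
  have k0 : ∃ d ∈ D, cfun d = Sum.inr 0 := by
    rcases hD (Sum.inl 0) with h | ⟨u, hu, hadj⟩
    · exact ⟨_, h, by norm_num [cfun, show ((0:Fin 5):ℕ) = 0 from rfl]⟩
    · refine ⟨u, hu, ?_⟩
      rw [nbr_v0 hadj]
      norm_num [cfun, show ((1:Fin 5):ℕ) = 1 from rfl]
  have k1 : ∃ d ∈ D, cfun d = Sum.inr 1 := by
    rcases hD (Sum.inl 4) with h | ⟨u, hu, hadj⟩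
    · exact ⟨_, h, by norm_num [cfun, show ((4:Fin 5):ℕ) = 4 from rfl]⟩
    · refine ⟨u, hu, ?_⟩
      rw [nbr_v4 hadj]
      norm_num [cfun, show ((3:Fin 5):ℕ) = 3 from rfl]
  have k2 : ∃ d ∈ D, cfun d = Sum.inr 2 := by
    rcases hD (Sum.inr (Sum.inr (Sum.inr ⟨0, ht⟩))) with h | ⟨u, hu, hadj⟩
    · exact ⟨_, h, rfl⟩
    · refine ⟨u, hu, ?_⟩
      rw [nbr_w hadj]
      norm_num [cfun, show ((2:Fin 5):ℕ) = 2 from rfl]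
  have hsurj : ∀ k : Fin s ⊕ Fin 3, ∃ d ∈ D, cfun d = k := by
    rintro (i | k)
    · rcases hD (Sum.inr (Sum.inr (Sum.inl i))) with h | ⟨u, hu, hadj⟩
      · exact ⟨_, h, rfl⟩
      · exact ⟨u, hu, by rw [nbr_q hadj]; rfl⟩
    · fin_cases k
      exacts [k0, k1, k2]
  have h1 : (Finset.univ : Finset (Fin s ⊕ Fin 3)) ⊆ D.image cfun := by
    intro k _
    obtain ⟨d, hd, hcd⟩ := hsurj k
    exact Finset.mem_image.2 ⟨d, hd, hcd⟩
  have h2 := Finset.card_le_card h1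
  have h3 := Finset.card_image_le (s := D) (f := cfun)
  simp [Finset.card_univ] at h2
  omega



variable {s t : ℕ}

/-- Characterization of edges avoiding `v₂`. -/
lemma edge_char {e : Sym2 (Fin 5 ⊕ Fin s ⊕ Fin s ⊕ Fin t)}
    (he : e ∈ (Tst s t).edgeSet) (h2 : (Sum.inl 2 : Fin 5 ⊕ Fin s ⊕ Fin s ⊕ Fin t) ∉ e) :
    e = s(Sum.inl 0, Sum.inl 1) ∨ e = s(Sum.inl 3, Sum.inl 4) ∨
      ∃ i : Fin s, e = s(Sum.inr (Sum.inl i), Sum.inr (Sum.inr (Sum.inl i))) := by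
  induction e using Sym2.ind with
  | _ a b =>
    rw [SimpleGraph.mem_edgeSet] at he
    simp only [Sym2.mem_iff, not_or] at h2
    obtain ⟨h2a, h2b⟩ := h2
    rcases a with a | a | a | a <;> rcases b with b | b | b | b <;>
      simp [Tst, SimpleGraph.fromRel_adj,
        show ((3:Fin 5):ℕ) = 3 from rfl, show ((4:Fin 5):ℕ) = 4 from rfl]
        at he h2a h2b ⊢ <;>
      first | omega | exact ⟨b, he, rfl⟩ | exact ⟨b, he.symm, rfl⟩

lemma pack_ub (R : Finset (Sym2 (Fin 5 ⊕ Fin s ⊕ Fin s ⊕ Fin t)))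
    (hR : IsTwoPacking (Tst s t) R) : R.card ≤ s + 4 := by
  classical
  obtain ⟨hsub, hpack⟩ := hR
  have hsplit := Finset.card_filter_add_card_filter_not
    (s := R) (p := fun e => (Sum.inl 2 : Fin 5 ⊕ Fin s ⊕ Fin s ⊕ Fin t) ∈ e)
  have hA : (R.filter (fun e => (Sum.inl 2 : Fin 5 ⊕ Fin s ⊕ Fin s ⊕ Fin t) ∈ e)).card ≤ 2 := by
    by_contra h
    push_neg at h
    obtain ⟨e₁, e₂, e₃, h1, h2, h3, h12, h13, h23⟩ := Finset.two_lt_card_iff.1 h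
    simp only [Finset.mem_filter] at h1 h2 h3
    rcases hpack e₁ h1.1 e₂ h2.1 e₃ h3.1 _ h1.2 h2.2 h3.2 with h' | h' | h' <;> tauto
  have hB : (R.filter (fun e => ¬ (Sum.inl 2 : Fin 5 ⊕ Fin s ⊕ Fin s ⊕ Fin t) ∈ e)).card
      ≤ s + 2 := by
    have hss : R.filter (fun e => ¬ (Sum.inl 2 : Fin 5 ⊕ Fin s ⊕ Fin s ⊕ Fin t) ∈ e) ⊆
        insert s(Sum.inl 0, Sum.inl 1) (insert s(Sum.inl 3, Sum.inl 4)
          (Finset.univ.image fun i : Fin s =>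
            s(Sum.inr (Sum.inl i), Sum.inr (Sum.inr (Sum.inl i))))) := by
      intro e he
      simp only [Finset.mem_filter] at he
      rcases edge_char (hsub he.1) he.2 with h | h | ⟨i, h⟩
      · simp [h]
      · simp [h]
      · subst h
        exact Finset.mem_insert_of_mem (Finset.mem_insert_of_mem
          (Finset.mem_image.2 ⟨i, Finset.mem_univ i, rfl⟩))
    calc (R.filter _).card ≤ _ := Finset.card_le_card hss
      _ ≤ _ + 1 := Finset.card_insert_le _ _
      _ ≤ (_ + 1) + 1 := by gcongr; exact Finset.card_insert_le _ _
      _ ≤ s + 2 := by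
          have := Finset.card_image_le (s := (Finset.univ : Finset (Fin s)))
            (f := fun i => s((Sum.inr (Sum.inl i) : Fin 5 ⊕ Fin s ⊕ Fin s ⊕ Fin t),
              Sum.inr (Sum.inr (Sum.inl i))))
          simp only [Finset.card_univ, Fintype.card_fin] at this
          omega
  omega

/-- The 2-packing: path edges plus all `pᵢqᵢ` edges. -/
noncomputable def R0 (s t : ℕ) : Finset (Sym2 (Fin 5 ⊕ Fin s ⊕ Fin s ⊕ Fin t)) :=
  insert s(Sum.inl 0, Sum.inl 1) (insert s(Sum.inl 1, Sum.inl 2)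
    (insert s(Sum.inl 2, Sum.inl 3) (insert s(Sum.inl 3, Sum.inl 4)
      (Finset.univ.image fun i : Fin s =>
        s(Sum.inr (Sum.inl i), Sum.inr (Sum.inr (Sum.inl i)))))))

lemma R0_card : (R0 s t).card = s + 4 := by
  classical
  rw [R0, Finset.card_insert_of_notMem (by simp [Sym2.eq_iff]),
    Finset.card_insert_of_notMem (by simp [Sym2.eq_iff]),
    Finset.card_insert_of_notMem (by simp [Sym2.eq_iff]),
    Finset.card_insert_of_notMem (by simp [Sym2.eq_iff]),
    Finset.card_image_of_injective _ (fun i j h => by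
      simpa [Sym2.eq_iff] using h)]
  simp only [Finset.card_univ, Fintype.card_fin]

/-- Edges of `R0` incident to each vertex. -/
noncomputable def ff (s t : ℕ) : (Fin 5 ⊕ Fin s ⊕ Fin s ⊕ Fin t) →
    Finset (Sym2 (Fin 5 ⊕ Fin s ⊕ Fin s ⊕ Fin t)) := fun v =>
  match v with
  | Sum.inl k =>
      if (k : ℕ) = 0 then {s(Sum.inl 0, Sum.inl 1)}
      else if (k : ℕ) = 1 then {s(Sum.inl 0, Sum.inl 1), s(Sum.inl 1, Sum.inl 2)}
      else if (k : ℕ) = 2 then {s(Sum.inl 1, Sum.inl 2), s(Sum.inl 2, Sum.inl 3)}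
      else if (k : ℕ) = 3 then {s(Sum.inl 2, Sum.inl 3), s(Sum.inl 3, Sum.inl 4)}
      else {s(Sum.inl 3, Sum.inl 4)}
  | Sum.inr (Sum.inl i) => {s(Sum.inr (Sum.inl i), Sum.inr (Sum.inr (Sum.inl i)))}
  | Sum.inr (Sum.inr (Sum.inl i)) => {s(Sum.inr (Sum.inl i), Sum.inr (Sum.inr (Sum.inl i)))}
  | Sum.inr (Sum.inr (Sum.inr _)) => ∅

lemma ff_card (v : Fin 5 ⊕ Fin s ⊕ Fin s ⊕ Fin t) : (ff s t v).card ≤ 2 := by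
  rcases v with a | a | a | a <;> simp only [ff]
  · split_ifs <;>
      first
        | simp
        | exact le_trans (Finset.card_insert_le _ _) (by simp)
  all_goals simp

lemma mem_ff {e : Sym2 (Fin 5 ⊕ Fin s ⊕ Fin s ⊕ Fin t)}
    {v : Fin 5 ⊕ Fin s ⊕ Fin s ⊕ Fin t} (he : e ∈ R0 s t) (hv : v ∈ e) :
    e ∈ ff s t v := by
  simp only [R0, Finset.mem_insert, Finset.mem_image] at he
  rcases he with h | h | h | h | ⟨i, _, h⟩ <;> subst h <;>
    rcases Sym2.mem_iff.1 hv with h | h <;> subst h <;>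
    norm_num [ff, Sym2.eq_iff, show ((0:Fin 5):ℕ) = 0 from rfl,
      show ((1:Fin 5):ℕ) = 1 from rfl, show ((2:Fin 5):ℕ) = 2 from rfl,
      show ((3:Fin 5):ℕ) = 3 from rfl, show ((4:Fin 5):ℕ) = 4 from rfl]

lemma R0_pack : IsTwoPacking (Tst s t) (R0 s t) := by
  constructor
  · intro e he
    simp only [R0, Finset.coe_insert, Set.mem_insert_iff, Finset.coe_image,
      Finset.coe_univ, Set.image_univ, Set.mem_range] at he
    rcases he with h | h | h | h | ⟨i, h⟩ <;> subst h <;>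
      rw [SimpleGraph.mem_edgeSet] <;>
      simp [Tst, SimpleGraph.fromRel_adj] <;> decide
  · intro e₁ h1 e₂ h2 e₃ h3 v hv1 hv2 hv3
    by_contra hcon
    push_neg at hcon
    obtain ⟨h12, h13, h23⟩ := hcon
    have := Finset.two_lt_card_iff.2 ⟨e₁, e₂, e₃, mem_ff h1 hv1, mem_ff h2 hv2,
      mem_ff h3 hv3, h12, h13, h23⟩
    have h2c := ff_card (s := s) (t := t) v
    omega

end TstAux

/-- For all integers `s, t ≥ 1`, with `r = s + 4`, the tree `T_{s,t}^r`
satisfies `γ(T_{s,t}^r) = ν₂(T_{s,t}^r) - 1`. -/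
theorem dominationNumber_eq_twoPackingNumber_sub_one_Tst (s t : ℕ)
    (hs : 1 ≤ s) (ht : 1 ≤ t) :
    dominationNumber (Tst s t) = twoPackingNumber (Tst s t) - 1 := by
  have hγ : dominationNumber (Tst s t) = s + 3 := by
    rw [dominationNumber]
    apply le_antisymm
    · exact Nat.sInf_le ⟨TstAux.D0 s t, TstAux.D0_dom, TstAux.D0_card⟩
    · refine le_csInf ?_ ?_
      · exact ⟨s + 3, ⟨TstAux.D0 s t, TstAux.D0_dom, TstAux.D0_card⟩⟩
      · rintro n ⟨D, hD, rfl⟩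
        exact TstAux.dom_lb ht D hD
  have hν : twoPackingNumber (Tst s t) = s + 4 := by
    rw [twoPackingNumber]
    apply le_antisymm
    · refine csSup_le ?_ ?_
      · exact ⟨s + 4, ⟨TstAux.R0 s t, TstAux.R0_pack, TstAux.R0_card⟩⟩
      · rintro n ⟨R, hR, rfl⟩
        exact TstAux.pack_ub R hR
    · exact le_csSup ⟨s + 4, by rintro n ⟨R, hR, rfl⟩; exact TstAux.pack_ub R hR⟩
        ⟨TstAux.R0 s t, TstAux.R0_pack, TstAux.R0_card⟩
  omega
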